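/- Let h be a positive definite inner product on ℝⁿ, W a vector with ‖W‖_h < 1, and F the associated navigation (Randers) norm with ξ := y - F(y)W for y ≠ 0. Then h(ξ,ξ) = F(y)², F is positively homogeneous of degree 1, F(y) > 0 for y ≠ 0, and F satisfies the triangle inequality F(y₁ + y₂) ≤ F(y₁) + F(y₂); i.e., F is a Minkowski norm (in the asymmetric sense). -/

import Mathlib

open scoped RealInnerProductSpace

/-- The navigation construction produces a Minkowski norm: with `‖W‖ < 1`,
`λ = 1 - ‖W‖²` and `F(y) = (√(λ⟪y,y⟫ + ⟪W,y⟫²) - ⟪W,y⟫)/λ`, one has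
`F(y) > 0` and `⟪y - F(y)W, y - F(y)W⟫ = F(y)²` for `y ≠ 0`, `F` is positively
1-homogeneous, and `F` is subadditive. -/
theorem stmt17 {E : Type*} [NormedAddCommGroup E] [InnerProductSpace ℝ E]
    [FiniteDimensional ℝ E]
    (W : E) (hW : ‖W‖ < 1)
    (F : E → ℝ)
    (hF : ∀ y : E, F y
      = (Real.sqrt ((1 - ‖W‖ ^ 2) * ⟪y, y⟫ + ⟪W, y⟫ ^ 2) - ⟪W, y⟫) / (1 - ‖W‖ ^ 2)) :
    (∀ y : E, y ≠ 0 → 0 < F y) ∧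
    (∀ y : E, y ≠ 0 → ⟪y - F y • W, y - F y • W⟫ = (F y) ^ 2) ∧
    (∀ (t : ℝ), 0 < t → ∀ y : E, F (t • y) = t * F y) ∧
    (∀ y₁ y₂ : E, F (y₁ + y₂) ≤ F y₁ + F y₂) := by
  have hW0 : (0:ℝ) ≤ ‖W‖ := norm_nonneg W
  set lam : ℝ := 1 - ‖W‖ ^ 2 with hlam
  have hlampos : 0 < lam := by nlinarith
  have harg : ∀ y : E, 0 ≤ lam * ⟪y, y⟫ + ⟪W, y⟫ ^ 2 := by
    intro y
    have h1 : (0:ℝ) ≤ ⟪y, y⟫ := real_inner_self_nonneg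
    nlinarith [sq_nonneg (⟪W, y⟫ : ℝ)]
  have hsq : ∀ y : E, (Real.sqrt (lam * ⟪y, y⟫ + ⟪W, y⟫ ^ 2)) ^ 2
      = lam * ⟪y, y⟫ + ⟪W, y⟫ ^ 2 := fun y => Real.sq_sqrt (harg y)
  -- positivity
  have pos : ∀ y : E, y ≠ 0 → 0 < F y := by
    intro y hy
    have hq : 0 < (⟪y, y⟫ : ℝ) := by
      rw [real_inner_self_eq_norm_sq]
      exact pow_pos (norm_pos_iff.mpr hy) 2
    have hlt : |(⟪W, y⟫ : ℝ)| < Real.sqrt (lam * ⟪y, y⟫ + ⟪W, y⟫ ^ 2) := by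
      have : Real.sqrt (⟪W, y⟫ ^ 2) < Real.sqrt (lam * ⟪y, y⟫ + ⟪W, y⟫ ^ 2) := by
        apply Real.sqrt_lt_sqrt (sq_nonneg _)
        nlinarith
      rwa [Real.sqrt_sq_eq_abs] at this
    have : (⟪W, y⟫ : ℝ) < Real.sqrt (lam * ⟪y, y⟫ + ⟪W, y⟫ ^ 2) :=
      lt_of_le_of_lt (le_abs_self _) hlt
    rw [hF y]
    exact div_pos (by linarith) hlampos
  refine ⟨pos, ?_, ?_, ?_⟩
  · -- the identity
    intro y hy
    have hkey : lam * F y + ⟪W, y⟫ = Real.sqrt (lam * ⟪y, y⟫ + ⟪W, y⟫ ^ 2) := by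
      rw [hF y]; field_simp; ring
    have h2 : (lam * F y + ⟪W, y⟫) ^ 2 = lam * ⟪y, y⟫ + ⟪W, y⟫ ^ 2 := by
      rw [hkey]; exact hsq y
    have h3 : lam * (lam * (F y) ^ 2 + 2 * F y * ⟪W, y⟫ - ⟪y, y⟫) = 0 := by
      nlinarith [h2]
    have h4 : lam * (F y) ^ 2 + 2 * F y * ⟪W, y⟫ - ⟪y, y⟫ = 0 :=
      (mul_eq_zero.mp h3).resolve_left hlampos.ne'
    have hWW : (⟪W, W⟫ : ℝ) = ‖W‖ ^ 2 := real_inner_self_eq_norm_sq W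
    have hyW : (⟪y, W⟫ : ℝ) = ⟪W, y⟫ := real_inner_comm W y
    have hexp : (⟪y - F y • W, y - F y • W⟫ : ℝ)
        = ⟪y, y⟫ - 2 * (F y * ⟪W, y⟫) + (F y)^2 * ⟪W, W⟫ := by
      simp only [inner_sub_sub_self, real_inner_smul_left, real_inner_smul_right, hyW]
      ring
    rw [hexp, hWW]
    have : ‖W‖ ^ 2 = 1 - lam := by rw [hlam]; ring
    rw [this]
    linarith [h4]
  · -- homogeneity
    intro t ht y
    have h1 : (⟪t • y, t • y⟫ : ℝ) = t ^ 2 * ⟪y, y⟫ := by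
      simp only [real_inner_smul_left, real_inner_smul_right]; ring
    have h2 : (⟪W, t • y⟫ : ℝ) = t * ⟪W, y⟫ := real_inner_smul_right W y t
    have h3 : lam * ⟪t • y, t • y⟫ + ⟪W, t • y⟫ ^ 2
        = t ^ 2 * (lam * ⟪y, y⟫ + ⟪W, y⟫ ^ 2) := by rw [h1, h2]; ring
    have h4 : Real.sqrt (t ^ 2 * (lam * ⟪y, y⟫ + ⟪W, y⟫ ^ 2))
        = t * Real.sqrt (lam * ⟪y, y⟫ + ⟪W, y⟫ ^ 2) := by
      rw [Real.sqrt_mul (sq_nonneg t), Real.sqrt_sq ht.le]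
    rw [hF (t • y), hF y, h3, h4, h2]; ring
  · -- subadditivity
    intro y₁ y₂
    set b1 : ℝ := ⟪W, y₁⟫
    set b2 : ℝ := ⟪W, y₂⟫
    set q1 : ℝ := ⟪y₁, y₁⟫
    set q2 : ℝ := ⟪y₂, y₂⟫
    set a : ℝ := ⟪y₁, y₂⟫
    have hb : (⟪W, y₁ + y₂⟫ : ℝ) = b1 + b2 := inner_add_right W y₁ y₂
    have hq : (⟪y₁ + y₂, y₁ + y₂⟫ : ℝ) = q1 + 2 * a + q2 := by
      simp only [inner_add_add_self]; rw [real_inner_comm y₁ y₂]; ring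
    set s1 : ℝ := Real.sqrt (lam * q1 + b1 ^ 2) with hs1
    set s2 : ℝ := Real.sqrt (lam * q2 + b2 ^ 2) with hs2
    have hs1sq : s1 ^ 2 = lam * q1 + b1 ^ 2 := hsq y₁
    have hs2sq : s2 ^ 2 = lam * q2 + b2 ^ 2 := hsq y₂
    have hs1nn : 0 ≤ s1 := Real.sqrt_nonneg _
    have hs2nn : 0 ≤ s2 := Real.sqrt_nonneg _
    have hcs : a ^ 2 ≤ q1 * q2 := by
      have := real_inner_mul_inner_self_le y₁ y₂
      rw [sq]; exact this
    have q1nn : 0 ≤ q1 := real_inner_self_nonneg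
    have q2nn : 0 ≤ q2 := real_inner_self_nonneg
    set u : ℝ := Real.sqrt q1 with hu
    set v : ℝ := Real.sqrt q2 with hv
    have hunn : 0 ≤ u := Real.sqrt_nonneg _
    have hvnn : 0 ≤ v := Real.sqrt_nonneg _
    have hu2 : u ^ 2 = q1 := Real.sq_sqrt q1nn
    have hv2 : v ^ 2 = q2 := Real.sq_sqrt q2nn
    have habs : |a| ≤ u * v := by
      have h1 : Real.sqrt (a ^ 2) ≤ Real.sqrt (q1 * q2) := Real.sqrt_le_sqrt hcs
      rwa [Real.sqrt_sq_eq_abs, Real.sqrt_mul q1nn] at h1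
    have habs1 : a ≤ u * v := (le_abs_self a).trans habs
    have habs2 : -a ≤ u * v := (neg_le_abs a).trans habs
    have hmain : lam * a + b1 * b2 ≤ s1 * s2 := by
      have hsq12 : (lam * a + b1 * b2) ^ 2 ≤ (s1 * s2) ^ 2 := by
        rw [mul_pow, hs1sq, hs2sq, ← hu2, ← hv2]
        have P1 : 0 ≤ lam * lam * ((u * v - a) * (u * v + a)) :=
          mul_nonneg (mul_nonneg hlampos.le hlampos.le)
            (mul_nonneg (by linarith) (by linarith))
        rcases le_or_gt 0 (b1 * b2) with hbb | hbb
        · have P2 : 0 ≤ lam * (u * b2 - v * b1) ^ 2 :=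
            mul_nonneg hlampos.le (sq_nonneg _)
          have P3 : 0 ≤ lam * (b1 * b2 * (u * v - a)) :=
            mul_nonneg hlampos.le (mul_nonneg hbb (by linarith))
          have e : (lam * u ^ 2 + b1 ^ 2) * (lam * v ^ 2 + b2 ^ 2)
              - (lam * a + b1 * b2) ^ 2
              = lam * lam * ((u * v - a) * (u * v + a))
                + lam * (u * b2 - v * b1) ^ 2
                + 2 * (lam * (b1 * b2 * (u * v - a))) := by ring
          linarith
        · have P2 : 0 ≤ lam * (u * b2 + v * b1) ^ 2 :=
            mul_nonneg hlampos.le (sq_nonneg _)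
          have P3 : 0 ≤ lam * (-(b1 * b2) * (u * v + a)) :=
            mul_nonneg hlampos.le (mul_nonneg (by linarith) (by linarith))
          have e : (lam * u ^ 2 + b1 ^ 2) * (lam * v ^ 2 + b2 ^ 2)
              - (lam * a + b1 * b2) ^ 2
              = lam * lam * ((u * v - a) * (u * v + a))
                + lam * (u * b2 + v * b1) ^ 2
                + 2 * (lam * (-(b1 * b2) * (u * v + a))) := by ring
          linarith
      have h5 : |lam * a + b1 * b2| ≤ s1 * s2 := by
        have h6 := Real.sqrt_le_sqrt hsq12
        rwa [Real.sqrt_sq_eq_abs, Real.sqrt_sq (mul_nonneg hs1nn hs2nn)] at h6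
      exact (le_abs_self _).trans h5
    have hsum : Real.sqrt (lam * (q1 + 2 * a + q2) + (b1 + b2) ^ 2) ≤ s1 + s2 := by
      have hle : lam * (q1 + 2 * a + q2) + (b1 + b2) ^ 2 ≤ (s1 + s2) ^ 2 := by
        have e1 : lam * (q1 + 2 * a + q2) + (b1 + b2) ^ 2
            = (lam * q1 + b1 ^ 2) + (lam * q2 + b2 ^ 2) + 2 * (lam * a + b1 * b2) := by
          ring
        have e2 : (s1 + s2) ^ 2 = s1 ^ 2 + s2 ^ 2 + 2 * (s1 * s2) := by ring
        rw [e1, e2, hs1sq, hs2sq]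
        linarith
      calc Real.sqrt (lam * (q1 + 2 * a + q2) + (b1 + b2) ^ 2)
          ≤ Real.sqrt ((s1 + s2) ^ 2) := Real.sqrt_le_sqrt hle
        _ = s1 + s2 := Real.sqrt_sq (by linarith)
    rw [hF (y₁ + y₂), hF y₁, hF y₂, hb, hq]
    rw [← add_div]
    gcongr
    linarith [hsum]
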